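/- In the same construction, the weight w_α = Σ_{I∈S} λ₂ γ₂^{r(I)} χ_{A_I} (with λ₂ > 0, 0 < γ₂, γ₂^{-1/(p-1)} < 1/(1-α)) satisfies, for every I ∈ S, w_α(I)·(∫_I w_α^{-1/(p-1)} dμ)^{p-1}/μ(I)^p = α^p / ([1 - γ₂(1-α)]·[1 - γ₂^{-1/(p-1)}(1-α)]^{p-1}); in particular w_α is an A_p weight with respect to the tree S with this constant. -/

import Mathlib

open MeasureTheory

lemma tsum_le_tsum_subset {β : Type*} (f : β → ENNReal) {s t : Set β} (h : s ⊆ t) :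
    ∑' x : s, f x ≤ ∑' x : t, f x := by
  rw [tsum_subtype, tsum_subtype]
  exact ENNReal.tsum_le_tsum fun b => Set.indicator_le_indicator_of_subset h (fun _ => zero_le) b

lemma tsum_insert_ennreal {β : Type*} (f : β → ENNReal) {a : β} {s : Set β} (h : a ∉ s) :
    ∑' x : ↥(insert a s), f x = f a + ∑' x : s, f x := by
  rw [tsum_subtype, tsum_subtype, Set.insert_eq,
    Set.indicator_union_of_disjoint (Set.disjoint_singleton_left.mpr h) f, ENNReal.tsum_add]
  congr 1
  rw [tsum_eq_single a]
  · simp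
  · intro b hb; simp [Set.indicator_of_notMem, hb]

lemma zero_of_tsum_subset {β : Type*} (f : β → ENNReal) {s t : Set β} (hst : s ⊆ t)
    (hle : ∑' x : t, f x ≤ ∑' x : s, f x) (hfin : ∑' x : s, f x ≠ ⊤) {a : β}
    (hat : a ∈ t) (has : a ∉ s) : f a = 0 := by
  have h1 : insert a s ⊆ t := Set.insert_subset hat hst
  have h2 : f a + ∑' x : s, f x ≤ ∑' x : s, f x := by
    rw [← tsum_insert_ennreal f has]
    exact (tsum_le_tsum_subset f h1).trans hle
  have h3 : f a + ∑' x : s, f x ≤ 0 + ∑' x : s, f x := by simpa using h2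
  simpa using (ENNReal.add_le_add_iff_right hfin).mp h3


lemma ap_algebra {p α lam2 γ2 a D1 D2 : ℝ} (n : ℕ) (hp : 1 < p) (hα0 : 0 < α)
    (hlam2 : 0 < lam2) (hγ0 : 0 < γ2) (ha : 0 < a) (hD1 : 0 < D1) (hD2 : 0 < D2) :
    (lam2 * α * γ2 ^ n * a / D1) *
      ((lam2 ^ (-(1/(p-1))) * α * (γ2 ^ (-(1/(p-1)))) ^ n * a / D2) ^ (p - 1)) / a ^ p
    = α ^ p / (D1 * D2 ^ (p - 1)) := by
  have hp1 : (0:ℝ) < p - 1 := by linarith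
  set e : ℝ := -(1/(p-1)) with he
  set b : ℝ := lam2 * γ2 ^ n with hb
  have hbpos : 0 < b := by positivity
  have hes : e * (p - 1) = -1 := by
    rw [he]; field_simp
  -- regroup: lam2^e * α * (γ2^e)^n * a = b^e * (α * a)
  have hgroup : lam2 ^ e * α * (γ2 ^ e) ^ n * a = b ^ e * (α * a) := by
    have h1 : (γ2 ^ e) ^ n = (γ2 ^ n) ^ e := by
      rw [← Real.rpow_natCast (γ2 ^ e) n, ← Real.rpow_natCast γ2 n,
        ← Real.rpow_mul hγ0.le, ← Real.rpow_mul hγ0.le, mul_comm]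
    rw [h1, hb, Real.mul_rpow hlam2.le (by positivity)]
    ring
  have hbe : 0 < b ^ e := Real.rpow_pos_of_pos hbpos e
  have hkey : (lam2 ^ e * α * (γ2 ^ e) ^ n * a / D2) ^ (p - 1)
      = b⁻¹ * (α * a) ^ (p - 1) / D2 ^ (p - 1) := by
    rw [hgroup, Real.div_rpow (by positivity) hD2.le,
      Real.mul_rpow hbe.le (by positivity), ← Real.rpow_mul hbpos.le, hes,
      Real.rpow_neg_one]
  have hαp : α ^ p = α ^ (p - 1) * α := by
    have h1 : α ^ ((p-1) + 1) = α ^ (p-1) * α ^ (1:ℝ) := Real.rpow_add hα0 (p-1) 1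
    rw [Real.rpow_one] at h1
    rw [← h1]
    norm_num
  have hap : a ^ p = a ^ (p - 1) * a := by
    have h1 : a ^ ((p-1) + 1) = a ^ (p-1) * a ^ (1:ℝ) := Real.rpow_add ha (p-1) 1
    rw [Real.rpow_one] at h1
    rw [← h1]
    norm_num
  have hfirst : lam2 * α * γ2 ^ n * a = b * (α * a) := by rw [hb]; ring
  rw [hkey, hfirst, Real.mul_rpow hα0.le ha.le, hαp, hap]
  have hne1 : D1 ≠ 0 := hD1.ne'
  have hne2 : D2 ^ (p-1) ≠ 0 := (Real.rpow_pos_of_pos hD2 _).ne'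
  have hne3 : a ^ (p-1) ≠ 0 := (Real.rpow_pos_of_pos ha _).ne'
  have hne4 : b ≠ 0 := hbpos.ne'
  field_simp


set_option maxHeartbeats 2000000

/-- In the same construction, the weight
`w_α = Σ_{I∈S} λ₂ γ₂^(r I) χ_{A_I}` (with `λ₂ > 0`, `γ₂ > 0`,
`γ₂(1-α) < 1`, `γ₂^(-1/(p-1))(1-α) < 1`) satisfies, for every `I ∈ S`,
`w_α(I)·(∫_I w_α^(-1/(p-1)) dμ)^(p-1)/μ(I)^p
  = α^p / ((1 - γ₂(1-α))·(1 - γ₂^(-1/(p-1))(1-α))^(p-1))`;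
in particular `w_α` is an `A_p` weight with respect to the tree `S` with this
constant. -/
theorem construction_Ap_constant {X : Type*} [MeasurableSpace X] (μ : Measure X)
    [IsProbabilityMeasure μ]
    (hna : ∀ s : Set X, MeasurableSet s → μ s ≠ 0 →
      ∃ t ⊆ s, MeasurableSet t ∧ 0 < μ t ∧ μ t < μ s)
    (p α lam2 γ2 : ℝ) (hp : 1 < p) (hα0 : 0 < α) (hα1 : α < 1) (hlam2 : 0 < lam2)
    (hγ0 : 0 < γ2) (hγ1 : γ2 * (1 - α) < 1) (hγ2 : γ2 ^ (-(1 / (p - 1))) * (1 - α) < 1)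
    (S : Set (Set X)) (F : Set X → Set (Set X)) (r : Set X → ℕ)
    (hSc : S.Countable)
    (hmeas : ∀ I ∈ S, MeasurableSet I)
    (hpos : ∀ I ∈ S, 0 < μ I)
    (hXS : Set.univ ∈ S)
    (hFS : ∀ I ∈ S, F I ⊆ S)
    (hFsub : ∀ I ∈ S, ∀ J ∈ F I, J ⊆ I)
    (hFdisj : ∀ I ∈ S, ∀ J ∈ F I, ∀ K ∈ F I, J ≠ K → μ (J ∩ K) = 0)
    (hFmeasure : ∀ I ∈ S, μ (⋃₀ F I) = ENNReal.ofReal (1 - α) * μ I)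
    (hnested : ∀ I ∈ S, ∀ J ∈ S, I ⊆ J ∨ J ⊆ I ∨ μ (I ∩ J) = 0)
    (hA : ∀ I ∈ S, μ (I \ ⋃₀ F I) = ENNReal.ofReal α * μ I)
    (hr0 : r Set.univ = 0)
    (hr : ∀ I ∈ S, ∀ J ∈ F I, r J = r I + 1)
    (hdecomp : ∀ I ∈ S, μ (I \ ⋃₀ {A : Set X | ∃ J ∈ S, J ⊆ I ∧ A = J \ ⋃₀ F J}) = 0)
    (hsum : ∀ I ∈ S, ∀ m : ℕ,
      ∑' J : {J : Set X // J ∈ S ∧ J ⊆ I ∧ r J = r I + m}, μ (J : Set X) =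
        ENNReal.ofReal ((1 - α) ^ m) * μ I)
    (w : X → ℝ)
    (hw : w = fun x => ∑' J : S, lam2 * γ2 ^ r (J : Set X) *
      Set.indicator ((J : Set X) \ ⋃₀ F (J : Set X)) (fun _ => (1 : ℝ)) x) :
    ∀ I ∈ S,
      (∫ x in I, w x ∂μ) * (∫ x in I, w x ^ (-(1 / (p - 1))) ∂μ) ^ (p - 1) /
          ((μ I).toReal) ^ p =
        α ^ p /
          ((1 - γ2 * (1 - α)) * (1 - γ2 ^ (-(1 / (p - 1))) * (1 - α)) ^ (p - 1)) := by
  -- existence of descendants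
  have hEx : ∀ I ∈ S, ∀ m : ℕ, ∃ K, K ∈ S ∧ K ⊆ I ∧ r K = r I + m := by
    intro I hI m
    by_contra h
    push_neg at h
    have hemp : IsEmpty {J : Set X // J ∈ S ∧ J ⊆ I ∧ r J = r I + m} :=
      ⟨fun ⟨J, hJ1, hJ2, hJ3⟩ => h J hJ1 hJ2 hJ3⟩
    have h0 := hsum I hI m
    rw [tsum_empty] at h0
    have h1α : (0:ℝ) < 1 - α := by linarith
    have : 0 < ENNReal.ofReal ((1 - α) ^ m) * μ I := by
      apply ENNReal.mul_pos
      · simp [ENNReal.ofReal_pos]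
        positivity
      · exact (hpos I hI).ne'
    rw [← h0] at this
    exact lt_irrefl _ this
  -- uniqueness at the same rank
  have huniq : ∀ I ∈ S, ∀ K ∈ S, K ⊆ I → r K = r I → K = I := by
    intro I hI K hK hKI hrK
    by_contra hne
    classical
    have h0 := hsum I hI 0
    set T := {J : Set X // J ∈ S ∧ J ⊆ I ∧ r J = r I + 0} with hT
    have hIT : (⟨I, hI, subset_refl I, rfl⟩ : T) ≠ ⟨K, hK, hKI, by omega⟩ := by
      intro hc
      exact hne (congrArg Subtype.val hc).symm
    have hle : μ I + μ K ≤ ∑' J : T, μ (J : Set X) := by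
      have := ENNReal.sum_le_tsum (f := fun J : T => μ (J : Set X))
        ({⟨I, hI, subset_refl I, rfl⟩, ⟨K, hK, hKI, by omega⟩} : Finset T)
      rwa [Finset.sum_pair hIT] at this
    rw [h0] at hle
    simp at hle
    have : μ I + μ K ≤ μ I + 0 := by simpa using hle
    have := (ENNReal.add_le_add_iff_left (measure_ne_top μ I)).mp this
    exact absurd (le_antisymm this zero_le) (hpos K hK).ne'
  -- ranks strictly increase along strict inclusions
  have hrank : ∀ I ∈ S, ∀ K ∈ S, K ⊆ I → K ≠ I → r I < r K := by
    intro I hI K hK hKI hne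
    by_contra hle
    push_neg at hle
    obtain ⟨L, hLS, hLK, hrL⟩ := hEx K hK (r I - r K)
    have hLI : r L = r I := by omega
    have : L = I := huniq I hI L hLS (hLK.trans hKI) hLI
    subst this
    exact hne (subset_antisymm hKI hLK)
  -- sum of measures of children
  have hFc : ∀ I ∈ S, (F I).Countable := fun I hI => hSc.mono (hFS I hI)
  have hsumF : ∀ I ∈ S, ∑' C : ↥(F I), μ (C : Set X) = ENNReal.ofReal (1 - α) * μ I := by
    intro I hI
    rw [← measure_sUnion₀ (hFc I hI)
      (fun J hJ K hK hne => hFdisj I hI J hJ K hK hne)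
      (fun s hs => (hmeas s (hFS I hI hs)).nullMeasurableSet)]
    exact hFmeasure I hI
  -- children are exactly the rank+1 subsets
  have hchild : ∀ I ∈ S, ∀ K ∈ S, K ⊆ I → r K = r I + 1 → K ∈ F I := by
    intro I hI K hK hKI hrK
    by_contra hKF
    have hsub : F I ⊆ {J : Set X | J ∈ S ∧ J ⊆ I ∧ r J = r I + 1} :=
      fun C hC => ⟨hFS I hI hC, hFsub I hI C hC, hr I hI C hC⟩
    have h1 : ∑' J : ↥{J : Set X | J ∈ S ∧ J ⊆ I ∧ r J = r I + 1}, μ (J : Set X)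
        = ENNReal.ofReal (1 - α) * μ I := by
      have := hsum I hI 1
      rw [pow_one] at this
      exact this
    have h2 := hsumF I hI
    have hfin : ∑' C : ↥(F I), μ (C : Set X) ≠ ⊤ := by
      rw [h2]; exact ENNReal.mul_ne_top ENNReal.ofReal_ne_top (measure_ne_top μ I)
    have := zero_of_tsum_subset (fun J => μ J) hsub (by rw [h1, h2]) hfin
      (a := K) ⟨hK, hKI, hrK⟩ hKF
    exact (hpos K hK).ne' this
  -- every proper subset lies inside some child
  have hAeq : ∀ I ∈ S, ∀ K ∈ S, K ⊆ I → K ≠ I → ∃ C ∈ F I, K ⊆ C := by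
    intro I hI K hK hKI hne
    by_contra hCc
    push_neg at hCc
    have hrIK : r I < r K := hrank I hI K hK hKI hne
    have h1α : (0:ℝ) ≤ 1 - α := by linarith
    set m := r K - r I with hmdef
    have hm1 : 1 ≤ m := by omega
    have hrm : r K = r I + m := by omega
    set Tt : Set (Set X) := {J : Set X | J ∈ S ∧ J ⊆ I ∧ r J = r I + m} with hTt
    have hKT : K ∈ Tt := ⟨hK, hKI, hrm⟩
    have hinj : Function.Injective
        (fun p : ((C : ↥(F I)) × ↥{J : Set X | J ∈ S ∧ J ⊆ (C : Set X)
            ∧ r J = r (C : Set X) + (m - 1)}) => ((p.2 : Set X))) := by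
      rintro ⟨⟨C, hC⟩, ⟨J, hJ⟩⟩ ⟨⟨C', hC'⟩, ⟨J', hJ'⟩⟩ hxy
      dsimp only at hxy
      have hCC : C = C' := by
        by_contra hCC
        have hd := hFdisj I hI C hC C' hC' hCC
        have : μ J ≤ μ (C ∩ C') :=
          measure_mono (Set.subset_inter hJ.2.1 (hxy ▸ hJ'.2.1))
        rw [hd] at this
        exact (hpos J hJ.1).ne' (le_antisymm this zero_le)
      subst hCC
      subst hxy
      rfl
    have hrange : ∀ p : ((C : ↥(F I)) × ↥{J : Set X | J ∈ S ∧ J ⊆ (C : Set X)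
        ∧ r J = r (C : Set X) + (m - 1)}), ((p.2 : Set X)) ∈ Tt \ {K} := by
      rintro ⟨⟨C, hC⟩, ⟨J, hJ⟩⟩
      have hCr : r C = r I + 1 := hr I hI C hC
      have hJr : r J = r C + (m - 1) := hJ.2.2
      dsimp only
      refine ⟨⟨hJ.1, hJ.2.1.trans (hFsub I hI C hC), by omega⟩, ?_⟩
      intro hJK
      simp only [Set.mem_singleton_iff] at hJK
      exact hCc C hC (hJK ▸ hJ.2.1)
    have htot : ∑' J : ↥Tt, μ (J : Set X) = ENNReal.ofReal ((1 - α) ^ m) * μ I := hsum I hI m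
    have hrest_fin : ∑' J : ↥(Tt \ {K}), μ (J : Set X) ≠ ⊤ := by
      intro hc
      have := tsum_le_tsum_subset (fun J => μ J) (Set.diff_subset (s := Tt) (t := {K}))
      rw [hc, htot] at this
      exact (ENNReal.mul_ne_top ENNReal.ofReal_ne_top (measure_ne_top μ I)) (top_le_iff.mp this)
    have hLHS : ∑' (C : ↥(F I)), ∑' (J : ↥{J : Set X | J ∈ S ∧ J ⊆ (C : Set X)
        ∧ r J = r (C : Set X) + (m - 1)}), μ (J : Set X)
        = ENNReal.ofReal ((1 - α) ^ m) * μ I := by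
      have h2 : ∀ C : ↥(F I), ∑' (J : ↥{J : Set X | J ∈ S ∧ J ⊆ (C : Set X)
          ∧ r J = r (C : Set X) + (m - 1)}), μ (J : Set X)
          = ENNReal.ofReal ((1 - α) ^ (m - 1)) * μ (C : Set X) :=
        fun C => hsum C (hFS I hI C.2) (m - 1)
      rw [tsum_congr h2, ENNReal.tsum_mul_left, hsumF I hI, ← mul_assoc,
        ← ENNReal.ofReal_mul (by positivity), ← pow_succ]
      congr 3
      omega
    have hstep : ENNReal.ofReal ((1 - α) ^ m) * μ I ≤ ∑' J : ↥(Tt \ {K}), μ (J : Set X) := by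
      rw [← hLHS, ← ENNReal.tsum_sigma (fun (C : ↥(F I))
        (J : ↥{J : Set X | J ∈ S ∧ J ⊆ (C : Set X) ∧ r J = r (C : Set X) + (m - 1)}) =>
          μ (J : Set X))]
      calc ∑' (p : (C : ↥(F I)) × ↥{J : Set X | J ∈ S ∧ J ⊆ (C : Set X)
              ∧ r J = r (C : Set X) + (m - 1)}), μ ((p.2 : Set X))
          = ∑' (p : (C : ↥(F I)) × ↥{J : Set X | J ∈ S ∧ J ⊆ (C : Set X)
              ∧ r J = r (C : Set X) + (m - 1)}),
              (Tt \ {K}).indicator (fun J => μ J) ((p.2 : Set X)) :=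
            tsum_congr (fun p => (Set.indicator_of_mem (hrange p) _).symm)
        _ ≤ ∑' (J : Set X), (Tt \ {K}).indicator (fun J => μ J) J :=
            ENNReal.tsum_comp_le_tsum_of_injective hinj _
        _ = _ := (tsum_subtype _ _).symm
    have hsplit : ∑' J : ↥Tt, μ (J : Set X) = μ K + ∑' J : ↥(Tt \ {K}), μ (J : Set X) := by
      have he : Tt = insert K (Tt \ {K}) := by
        rw [Set.insert_diff_singleton, Set.insert_eq_of_mem hKT]
      conv_lhs => rw [he]
      exact tsum_insert_ennreal (fun J => μ J) (a := K) (s := Tt \ {K}) (fun hc => hc.2 rfl)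
    rw [htot] at hsplit
    have hfinal : μ K + ∑' J : ↥(Tt \ {K}), μ (J : Set X)
        ≤ 0 + ∑' J : ↥(Tt \ {K}), μ (J : Set X) := by
      rw [zero_add, ← hsplit]
      exact hstep
    have := (ENNReal.add_le_add_iff_right hrest_fin).mp hfinal
    exact (hpos K hK).ne' (le_antisymm this zero_le)
  -- a proper subelement is a.e. inside the children
  have hLemA : ∀ I ∈ S, ∀ K ∈ S, K ⊆ I → K ≠ I → μ (K \ ⋃₀ F I) = 0 := by
    intro I hI K hK hKI hne
    obtain ⟨C, hC, hKC⟩ := hAeq I hI K hK hKI hne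
    have : K \ ⋃₀ F I = ∅ :=
      Set.diff_eq_empty.mpr (hKC.trans (Set.subset_sUnion_of_mem hC))
    simp [this]
  -- if J is not a subset of I then A_J ∩ I is null
  have hAinter : ∀ I ∈ S, ∀ J ∈ S, ¬ J ⊆ I → μ ((J \ ⋃₀ F J) ∩ I) = 0 := by
    intro I hI J hJ hJI
    rcases hnested J hJ I hI with h | h | h
    · exact absurd h hJI
    · -- I ⊆ J, I ≠ J
      have hne : I ≠ J := by rintro rfl; exact hJI (subset_refl _)
      have h0 : μ (I \ ⋃₀ F J) = 0 := hLemA J hJ I hI h hne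
      refine measure_mono_null ?_ h0
      intro x hx
      exact ⟨hx.2, hx.1.2⟩
    · refine measure_mono_null ?_ h
      intro x hx
      exact ⟨hx.1.1, hx.2⟩
  -- the sets A_J are pairwise a.e. disjoint
  have hAdisj : ∀ J ∈ S, ∀ K ∈ S, J ≠ K →
      μ ((J \ ⋃₀ F J) ∩ (K \ ⋃₀ F K)) = 0 := by
    intro J hJ K hK hne
    rcases hnested J hJ K hK with h | h | h
    · have h0 : μ (J \ ⋃₀ F K) = 0 := hLemA K hK J hJ h hne
      refine measure_mono_null ?_ h0
      intro x hx
      exact ⟨hx.1.1, hx.2.2⟩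
    · have h0 : μ (K \ ⋃₀ F J) = 0 := hLemA J hJ K hK h (Ne.symm hne)
      refine measure_mono_null ?_ h0
      intro x hx
      exact ⟨hx.2.1, hx.1.2⟩
    · refine measure_mono_null ?_ h
      intro x hx
      exact ⟨hx.1.1, hx.2.1⟩
  have h1αle : (0:ℝ) ≤ 1 - α := by linarith
  have hScount : Countable ↥S := hSc.to_subtype
  have hAmeas : ∀ J ∈ S, MeasurableSet (J \ ⋃₀ F J) := fun J hJ =>
    (hmeas J hJ).diff (MeasurableSet.sUnion (hFc J hJ) (fun C hC => hmeas C (hFS J hJ hC)))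
  -- bad set
  obtain ⟨B, hB0, hBprop⟩ : ∃ B : Set X, μ B = 0 ∧ ∀ x, x ∉ B → ∀ J ∈ S, ∀ K ∈ S, J ≠ K →
      ¬(x ∈ J \ ⋃₀ F J ∧ x ∈ K \ ⋃₀ F K) := by
    refine ⟨⋃ (J : ↥S) (K : ↥S) (_ : (J : Set X) ≠ (K : Set X)),
      (((J : Set X) \ ⋃₀ F (J : Set X)) ∩ ((K : Set X) \ ⋃₀ F (K : Set X))), ?_, ?_⟩
    · exact measure_iUnion_null fun J => measure_iUnion_null fun K =>
        measure_iUnion_null fun hne => hAdisj J J.2 K K.2 hne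
    · intro x hx J hJ K hK hne hmem
      exact hx (Set.mem_iUnion.2 ⟨⟨J, hJ⟩, Set.mem_iUnion.2 ⟨⟨K, hK⟩,
        Set.mem_iUnion.2 ⟨hne, hmem.1, hmem.2⟩⟩⟩)
  -- pointwise dichotomy off the bad set
  have hcases : ∀ x ∉ B,
      (∀ J : ↥S, x ∉ ((J : Set X) \ ⋃₀ F (J : Set X))) ∨
      (∃ J₀ : ↥S, x ∈ ((J₀ : Set X) \ ⋃₀ F (J₀ : Set X)) ∧
        ∀ K : ↥S, K ≠ J₀ → x ∉ ((K : Set X) \ ⋃₀ F (K : Set X))) := by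
    intro x hx
    by_cases hex : ∃ J₀ : ↥S, x ∈ ((J₀ : Set X) \ ⋃₀ F (J₀ : Set X))
    · obtain ⟨J₀, hJ₀⟩ := hex
      refine Or.inr ⟨J₀, hJ₀, fun K hK hxK => ?_⟩
      have hvals : (K : Set X) ≠ (J₀ : Set X) := fun hc => hK (Subtype.ext hc)
      exact hBprop x hx K K.2 J₀ J₀.2 hvals ⟨hxK, hJ₀⟩
    · push_neg at hex
      exact Or.inl hex
  -- evaluation of the real sums
  have hval0 : ∀ (lam gam : ℝ) (x : X), (∀ J : ↥S, x ∉ ((J : Set X) \ ⋃₀ F (J : Set X))) →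
      (∑' J : S, lam * gam ^ r (J : Set X) *
        Set.indicator ((J : Set X) \ ⋃₀ F (J : Set X)) (fun _ => (1:ℝ)) x) = 0 := by
    intro lam gam x hx
    have : ∀ J : ↥S, lam * gam ^ r (J : Set X) *
        Set.indicator ((J : Set X) \ ⋃₀ F (J : Set X)) (fun _ => (1:ℝ)) x = 0 := by
      intro J
      rw [Set.indicator_of_notMem (hx J), mul_zero]
    rw [tsum_congr this, tsum_zero]
  have hval1 : ∀ (lam gam : ℝ) (x : X) (J₀ : ↥S),
      x ∈ ((J₀ : Set X) \ ⋃₀ F (J₀ : Set X)) →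
      (∀ K : ↥S, K ≠ J₀ → x ∉ ((K : Set X) \ ⋃₀ F (K : Set X))) →
      (∑' J : S, lam * gam ^ r (J : Set X) *
        Set.indicator ((J : Set X) \ ⋃₀ F (J : Set X)) (fun _ => (1:ℝ)) x)
        = lam * gam ^ r (J₀ : Set X) := by
    intro lam gam x J₀ hJ₀ huniq1
    have h1 : ∀ K : ↥S, K ≠ J₀ → lam * gam ^ r (K : Set X) *
        Set.indicator ((K : Set X) \ ⋃₀ F (K : Set X)) (fun _ => (1:ℝ)) x = 0 := by
      intro K hK
      rw [Set.indicator_of_notMem (huniq1 K hK), mul_zero]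
    rw [tsum_eq_single J₀ h1, Set.indicator_of_mem hJ₀, mul_one]
  have haenB : ∀ᵐ x ∂μ, x ∉ B := by
    rw [ae_iff]
    simpa [not_not] using hB0
  -- master integral formula
  have hM : ∀ lam gam : ℝ, 0 < lam → 0 < gam → gam * (1 - α) < 1 → ∀ I ∈ S,
      ∫ x in I, (∑' J : S, lam * gam ^ r (J : Set X) *
        Set.indicator ((J : Set X) \ ⋃₀ F (J : Set X)) (fun _ => (1:ℝ)) x) ∂μ
      = lam * α * gam ^ r I * (μ I).toReal / (1 - gam * (1 - α)) := by
    intro lam gam hlam hgam hgam1 I hI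
    set q : ℝ := gam * (1 - α) with hq
    have hq0 : 0 ≤ q := by positivity
    set ψ : X → ℝ := fun x => ∑' J : S, lam * gam ^ r (J : Set X) *
      Set.indicator ((J : Set X) \ ⋃₀ F (J : Set X)) (fun _ => (1:ℝ)) x with hψ
    set Ψ : X → ENNReal := fun x => ∑' J : S, ENNReal.ofReal (lam * gam ^ r (J : Set X)) *
      Set.indicator ((J : Set X) \ ⋃₀ F (J : Set X)) (fun _ => (1:ENNReal)) x with hΨ
    have hΨval0 : ∀ x : X, (∀ J : ↥S, x ∉ ((J : Set X) \ ⋃₀ F (J : Set X))) → Ψ x = 0 := by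
      intro x hx
      simp only [hΨ]
      have : ∀ J : ↥S, ENNReal.ofReal (lam * gam ^ r (J : Set X)) *
          Set.indicator ((J : Set X) \ ⋃₀ F (J : Set X)) (fun _ => (1:ENNReal)) x = 0 := by
        intro J
        rw [Set.indicator_of_notMem (hx J), mul_zero]
      rw [tsum_congr this, tsum_zero]
    have hΨval1 : ∀ (x : X) (J₀ : ↥S), x ∈ ((J₀ : Set X) \ ⋃₀ F (J₀ : Set X)) →
        (∀ K : ↥S, K ≠ J₀ → x ∉ ((K : Set X) \ ⋃₀ F (K : Set X))) →
        Ψ x = ENNReal.ofReal (lam * gam ^ r (J₀ : Set X)) := by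
      intro x J₀ hJ₀ huniq1
      simp only [hΨ]
      have h1 : ∀ K : ↥S, K ≠ J₀ → ENNReal.ofReal (lam * gam ^ r (K : Set X)) *
          Set.indicator ((K : Set X) \ ⋃₀ F (K : Set X)) (fun _ => (1:ENNReal)) x = 0 := by
        intro K hK
        rw [Set.indicator_of_notMem (huniq1 K hK), mul_zero]
      rw [tsum_eq_single J₀ h1, Set.indicator_of_mem hJ₀, mul_one]
    have hmeasΨ : Measurable Ψ := by
      rw [hΨ]
      exact Measurable.ennreal_tsum fun J =>
        (Measurable.indicator measurable_const (hAmeas J.1 J.2)).const_mul _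
    have haeeq : ψ =ᶠ[MeasureTheory.ae μ] fun x => (Ψ x).toReal := by
      filter_upwards [haenB] with x hx
      rcases hcases x hx with h | ⟨J₀, hJ₀, huniq1⟩
      · simp only [hψ]
        rw [hval0 lam gam x h, hΨval0 x h]
        simp
      · simp only [hψ]
        rw [hval1 lam gam x J₀ hJ₀ huniq1, hΨval1 x J₀ hJ₀ huniq1,
          ENNReal.toReal_ofReal (by positivity)]
    have hofReal : (fun x => ENNReal.ofReal (ψ x)) =ᶠ[MeasureTheory.ae μ] Ψ := by
      filter_upwards [haenB] with x hx
      rcases hcases x hx with h | ⟨J₀, hJ₀, huniq1⟩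
      · simp only [hψ]
        rw [hval0 lam gam x h, hΨval0 x h]
        simp
      · simp only [hψ]
        rw [hval1 lam gam x J₀ hJ₀ huniq1, hΨval1 x J₀ hJ₀ huniq1]
    have hnonneg : 0 ≤ᶠ[MeasureTheory.ae μ] ψ := by
      filter_upwards [haenB] with x hx
      rcases hcases x hx with h | ⟨J₀, hJ₀, huniq1⟩
      · simp only [Pi.zero_apply, hψ]
        rw [hval0 lam gam x h]
      · simp only [Pi.zero_apply, hψ]
        rw [hval1 lam gam x J₀ hJ₀ huniq1]
        positivity
    have hsm : AEStronglyMeasurable ψ (μ.restrict I) :=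
      ((hmeasΨ.ennreal_toReal.aestronglyMeasurable).congr haeeq.symm).restrict
    have step1 : ∫ x in I, ψ x ∂μ = (∫⁻ x in I, ENNReal.ofReal (ψ x) ∂μ).toReal :=
      integral_eq_lintegral_of_nonneg_ae (ae_restrict_of_ae hnonneg) hsm
    have step2 : ∫⁻ x in I, ENNReal.ofReal (ψ x) ∂μ = ∫⁻ x in I, Ψ x ∂μ :=
      lintegral_congr_ae (ae_restrict_of_ae hofReal)
    have step3 : ∫⁻ x in I, Ψ x ∂μ = ∑' J : ↥S, ENNReal.ofReal (lam * gam ^ r (J : Set X)) *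
        μ (((J : Set X) \ ⋃₀ F (J : Set X)) ∩ I) := by
      simp only [hΨ]
      rw [lintegral_tsum (μ := μ.restrict I) (f := fun (J : ↥S) x =>
        ENNReal.ofReal (lam * gam ^ r (J : Set X)) *
          Set.indicator ((J : Set X) \ ⋃₀ F (J : Set X)) (fun _ => (1:ENNReal)) x)
        (fun J => ((Measurable.indicator measurable_const
          (hAmeas J.1 J.2)).const_mul _).aemeasurable)]
      congr 1
      funext J
      rw [lintegral_const_mul _ (Measurable.indicator measurable_const (hAmeas J.1 J.2)),
        lintegral_indicator_const (hAmeas J.1 J.2), one_mul,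
        Measure.restrict_apply (hAmeas J.1 J.2)]
    have hq1 : (0:ℝ) < 1 - q := by linarith
    have hgeom : ∑' m : ℕ, ENNReal.ofReal (q ^ m) = ENNReal.ofReal ((1 - q)⁻¹) := by
      rw [← ENNReal.ofReal_tsum_of_nonneg (fun m => by positivity)
        (summable_geometric_of_lt_one hq0 hgam1), tsum_geometric_of_lt_one hq0 hgam1]
    have hseries : ∑' J : ↥S, ENNReal.ofReal (lam * gam ^ r (J : Set X)) *
        μ (((J : Set X) \ ⋃₀ F (J : Set X)) ∩ I)
        = ENNReal.ofReal (lam * α * gam ^ r I / (1 - q)) * μ I := by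
      set g : Set X → ENNReal := fun J =>
        ENNReal.ofReal (lam * gam ^ r J) * μ ((J \ ⋃₀ F J) ∩ I) with hg
      have e1 : ∑' J : ↥S, g (J : Set X)
          = ∑' J : ↥{J : Set X | J ∈ S ∧ J ⊆ I}, g (J : Set X) := by
        rw [tsum_subtype, tsum_subtype]
        congr 1
        funext J
        by_cases hJS : J ∈ S
        · by_cases hJI : J ⊆ I
          · rw [Set.indicator_of_mem hJS,
              Set.indicator_of_mem (show J ∈ {J : Set X | J ∈ S ∧ J ⊆ I} from ⟨hJS, hJI⟩)]
          · rw [Set.indicator_of_mem hJS,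
              Set.indicator_of_notMem (show J ∉ {J : Set X | J ∈ S ∧ J ⊆ I}
                from fun hc => hJI hc.2)]
            simp only [hg]
            rw [hAinter I hI J hJS hJI, mul_zero]
        · rw [Set.indicator_of_notMem hJS,
            Set.indicator_of_notMem (show J ∉ {J : Set X | J ∈ S ∧ J ⊆ I}
              from fun hc => hJS hc.1)]
      have hbij : Function.Bijective
          (fun p : (Σ m : ℕ, ↥{J : Set X | J ∈ S ∧ J ⊆ I ∧ r J = r I + m}) =>
            (⟨p.2.1, p.2.2.1, p.2.2.2.1⟩ : ↥{J : Set X | J ∈ S ∧ J ⊆ I})) := by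
        constructor
        · rintro ⟨m, ⟨J, hJ⟩⟩ ⟨m', ⟨J', hJ'⟩⟩ hpq
          simp only [Subtype.mk.injEq] at hpq
          subst hpq
          have hJ2 := hJ.2.2
          have hJ2' := hJ'.2.2
          have hmm : m = m' := by omega
          subst hmm
          rfl
        · rintro ⟨J, hJS, hJI⟩
          rcases eq_or_ne J I with rfl | hne
          · exact ⟨⟨0, ⟨J, hJS, hJI, by omega⟩⟩, rfl⟩
          · have := hrank I hI J hJS hJI hne
            exact ⟨⟨r J - r I, ⟨J, hJS, hJI, by omega⟩⟩, rfl⟩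
      have e2 : ∑' J : ↥{J : Set X | J ∈ S ∧ J ⊆ I}, g (J : Set X)
          = ∑' (m : ℕ), ∑' (J : ↥{J : Set X | J ∈ S ∧ J ⊆ I ∧ r J = r I + m}),
              g (J : Set X) := by
        calc ∑' J : ↥{J : Set X | J ∈ S ∧ J ⊆ I}, g (J : Set X)
            = ∑' p : (Σ m : ℕ, ↥{J : Set X | J ∈ S ∧ J ⊆ I ∧ r J = r I + m}),
                g (((Equiv.ofBijective _ hbij) p : Set X)) :=
              ((Equiv.ofBijective _ hbij).tsum_eq
                (fun J : ↥{J : Set X | J ∈ S ∧ J ⊆ I} => g (J : Set X))).symm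
          _ = ∑' p : (Σ m : ℕ, ↥{J : Set X | J ∈ S ∧ J ⊆ I ∧ r J = r I + m}),
                g ((p.2 : Set X)) := tsum_congr (fun p => rfl)
          _ = _ := by
                exact ENNReal.tsum_sigma
                  (β := fun m : ℕ => ↥{J : Set X | J ∈ S ∧ J ⊆ I ∧ r J = r I + m})
                  fun m J => g (J : Set X)
      have e3 : ∀ m : ℕ, ∑' (J : ↥{J : Set X | J ∈ S ∧ J ⊆ I ∧ r J = r I + m}),
          g (J : Set X)
          = ENNReal.ofReal (lam * α * gam ^ r I) * ENNReal.ofReal (q ^ m) * μ I := by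
        intro m
        have ht : ∀ J : ↥{J : Set X | J ∈ S ∧ J ⊆ I ∧ r J = r I + m},
            g (J : Set X) = (ENNReal.ofReal (lam * gam ^ (r I + m)) * ENNReal.ofReal α)
              * μ (J : Set X) := by
          rintro ⟨J, hJS, hJI, hJr⟩
          simp only [hg]
          have hAI : (J \ ⋃₀ F J) ∩ I = J \ ⋃₀ F J :=
            Set.inter_eq_self_of_subset_left (Set.diff_subset.trans hJI)
          rw [hAI, hA J hJS, hJr, mul_assoc]
        rw [tsum_congr ht, ENNReal.tsum_mul_left]
        have hs : ∑' (J : ↥{J : Set X | J ∈ S ∧ J ⊆ I ∧ r J = r I + m}), μ (J : Set X)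
            = ENNReal.ofReal ((1 - α) ^ m) * μ I := hsum I hI m
        rw [hs]
        have h1 : ENNReal.ofReal (lam * gam ^ (r I + m)) * ENNReal.ofReal α
            = ENNReal.ofReal (lam * gam ^ (r I + m) * α) :=
          (ENNReal.ofReal_mul (by positivity)).symm
        have h2 : ENNReal.ofReal (lam * gam ^ (r I + m) * α) * ENNReal.ofReal ((1 - α) ^ m)
            = ENNReal.ofReal (lam * gam ^ (r I + m) * α * (1 - α) ^ m) :=
          (ENNReal.ofReal_mul (by positivity)).symm
        have h3 : ENNReal.ofReal (lam * α * gam ^ r I) * ENNReal.ofReal (q ^ m)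
            = ENNReal.ofReal (lam * α * gam ^ r I * q ^ m) :=
          (ENNReal.ofReal_mul (by positivity)).symm
        have h4 : lam * gam ^ (r I + m) * α * (1 - α) ^ m = lam * α * gam ^ r I * q ^ m := by
          rw [hq, mul_pow, pow_add]
          ring
        rw [h1, ← mul_assoc, h2, h4, ← h3]

      calc ∑' J : ↥S, ENNReal.ofReal (lam * gam ^ r (J : Set X)) *
            μ (((J : Set X) \ ⋃₀ F (J : Set X)) ∩ I)
          = ∑' J : ↥S, g (J : Set X) := rfl
        _ = ∑' (m : ℕ), ∑' (J : ↥{J : Set X | J ∈ S ∧ J ⊆ I ∧ r J = r I + m}),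
              g (J : Set X) := by rw [e1, e2]
        _ = ∑' (m : ℕ), ENNReal.ofReal (lam * α * gam ^ r I) * ENNReal.ofReal (q ^ m)
              * μ I := tsum_congr e3
        _ = (∑' (m : ℕ), ENNReal.ofReal (lam * α * gam ^ r I) * ENNReal.ofReal (q ^ m))
              * μ I := ENNReal.tsum_mul_right
        _ = ENNReal.ofReal (lam * α * gam ^ r I) * ENNReal.ofReal ((1 - q)⁻¹) * μ I := by
              rw [ENNReal.tsum_mul_left, hgeom]
        _ = ENNReal.ofReal (lam * α * gam ^ r I / (1 - q)) * μ I := by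
              rw [← ENNReal.ofReal_mul (by positivity), div_eq_mul_inv]
    rw [hψ] at step1
    rw [step1, step2, step3, hseries, ENNReal.toReal_mul,
      ENNReal.toReal_ofReal (by positivity)]
    ring
  intro I hI
  set e : ℝ := -(1 / (p - 1)) with he
  have hp1 : (0:ℝ) < p - 1 := by linarith
  have he0 : e ≠ 0 := by
    have : (0:ℝ) < 1 / (p - 1) := by positivity
    rw [he]
    linarith
  have hg'pos : 0 < γ2 ^ e := Real.rpow_pos_of_pos hγ0 e
  have hl'pos : 0 < lam2 ^ e := Real.rpow_pos_of_pos hlam2 e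
  have hI1 : ∫ x in I, w x ∂μ
      = lam2 * α * γ2 ^ r I * (μ I).toReal / (1 - γ2 * (1 - α)) := by
    simp only [hw]
    exact hM lam2 γ2 hlam2 hγ0 hγ1 I hI
  have haew : (fun x => w x ^ e) =ᵐ[μ] (fun x => ∑' J : S,
      lam2 ^ e * (γ2 ^ e) ^ r (J : Set X) *
        Set.indicator ((J : Set X) \ ⋃₀ F (J : Set X)) (fun _ => (1:ℝ)) x) := by
    filter_upwards [haenB] with x hx
    rcases hcases x hx with h | ⟨J₀, hJ₀, huniq1⟩
    · simp only [hw]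
      rw [hval0 lam2 γ2 x h, hval0 (lam2 ^ e) (γ2 ^ e) x h, Real.zero_rpow he0]
    · simp only [hw]
      rw [hval1 lam2 γ2 x J₀ hJ₀ huniq1, hval1 (lam2 ^ e) (γ2 ^ e) x J₀ hJ₀ huniq1,
        Real.mul_rpow hlam2.le (by positivity)]
      congr 1
      rw [← Real.rpow_natCast γ2 (r (J₀ : Set X)), ← Real.rpow_natCast (γ2 ^ e) (r (J₀ : Set X)),
        ← Real.rpow_mul hγ0.le, ← Real.rpow_mul hγ0.le, mul_comm]
  have hI2 : ∫ x in I, w x ^ e ∂μ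
      = lam2 ^ e * α * (γ2 ^ e) ^ r I * (μ I).toReal / (1 - γ2 ^ e * (1 - α)) := by
    rw [integral_congr_ae (ae_restrict_of_ae haew)]
    exact hM (lam2 ^ e) (γ2 ^ e) hl'pos hg'pos hγ2 I hI
  have ha : 0 < (μ I).toReal := ENNReal.toReal_pos (hpos I hI).ne' (measure_ne_top μ I)
  have hD1 : 0 < 1 - γ2 * (1 - α) := sub_pos.mpr hγ1
  have hD2 : 0 < 1 - γ2 ^ e * (1 - α) := sub_pos.mpr hγ2
  rw [hI1, hI2]
  exact ap_algebra (r I) hp hα0 hlam2 hγ0 ha hD1 hD2
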